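/- Let P be a Hermitian positive definite matrix and A a matrix such that the field-of-values bound |u* A u| ≥ c · u* P u and ‖A u‖_{P^{-1}} ≤ C ‖u‖_P hold for all u. Then all eigenvalues of P^{-1}A lie in the annulus c ≤ |λ| ≤ C, hence the spectral condition number of the preconditioned operator P^{-1}A is at most C/c. -/

import Mathlib

open Matrix
open scoped ComplexOrder

/-- Field-of-values bounds with respect to an SPD matrix `P` localize the
spectrum of `P⁻¹ A` in the annulus `c ≤ |λ| ≤ C`. -/
theorem spectrum_annulus_of_fov_bounds (n : ℕ) (P A : Matrix (Fin n) (Fin n) ℂ)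
    (hP : P.PosDef) (c C : ℝ) (hc : 0 < c) (hC : 0 < C)
    (hlow : ∀ u : Fin n → ℂ,
      c * (star u ⬝ᵥ P.mulVec u).re ≤ ‖star u ⬝ᵥ A.mulVec u‖)
    (hup : ∀ u : Fin n → ℂ,
      (star (A.mulVec u) ⬝ᵥ P⁻¹.mulVec (A.mulVec u)).re ≤
        C ^ 2 * (star u ⬝ᵥ P.mulVec u).re) :
    ∀ (lam : ℂ) (v : Fin n → ℂ), v ≠ 0 → (P⁻¹ * A).mulVec v = lam • v →
      c ≤ ‖lam‖ ∧ ‖lam‖ ≤ C := by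
  intro lam v hv heig
  have hdet : IsUnit P.det := hP.det_pos.ne'.isUnit
  have hPinv : P * P⁻¹ = 1 := Matrix.mul_nonsing_inv P hdet
  -- A v = lam • P v
  have hAv : A.mulVec v = lam • P.mulVec v := by
    have := congrArg (P.mulVec) heig
    rw [Matrix.mulVec_mulVec, ← Matrix.mul_assoc, hPinv, Matrix.one_mul] at this
    rw [this, Matrix.mulVec_smul]
  set p : ℂ := star v ⬝ᵥ P.mulVec v with hp
  have hppos : 0 < p := hP.dotProduct_mulVec_pos hv
  have hpre : 0 < p.re := (Complex.lt_def.mp hppos).1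
  have him : p.im = 0 := ((Complex.lt_def.mp hppos).2).symm
  have habs : ‖p‖ = p.re := by
    rw [Complex.norm_def, Complex.normSq_apply, him]
    simp [Real.sqrt_mul_self hpre.le]
  constructor
  · -- lower bound
    have h1 := hlow v
    have h2 : star v ⬝ᵥ A.mulVec v = lam * p := by
      rw [hAv, dotProduct_smul, smul_eq_mul]
    rw [h2, norm_mul, habs] at h1
    exact le_of_mul_le_mul_right h1 hpre
  · -- upper bound
    have h1 := hup v
    have hPiP : P⁻¹.mulVec (P.mulVec v) = v := by
      rw [Matrix.mulVec_mulVec, Matrix.nonsing_inv_mul P hdet, Matrix.one_mulVec]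
    have h2 : star (A.mulVec v) ⬝ᵥ P⁻¹.mulVec (A.mulVec v)
        = (starRingEnd ℂ) lam * lam * p := by
      rw [hAv, star_smul, Matrix.mulVec_smul, hPiP, smul_dotProduct,
        dotProduct_smul]
      have h3 : star (P.mulVec v) ⬝ᵥ v = p := by
        rw [Matrix.star_mulVec, ← Matrix.dotProduct_mulVec, hP.1.eq]
      rw [h3]
      simp [smul_eq_mul]; ring
    have h4 : ((starRingEnd ℂ) lam * lam * p).re = ‖lam‖ ^ 2 * p.re := by
      have : (starRingEnd ℂ) lam * lam = (‖lam‖ ^ 2 : ℝ) := by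
        rw [mul_comm, Complex.mul_conj]
        norm_cast
        exact (Complex.sq_norm lam).symm
      rw [this, Complex.mul_re, Complex.ofReal_re, Complex.ofReal_im, him]
      ring
    rw [h2, h4] at h1
    have h5 : ‖lam‖ ^ 2 ≤ C ^ 2 := le_of_mul_le_mul_right h1 hpre
    nlinarith [norm_nonneg lam]
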